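/- Let $K$ be a field of characteristic zero, $d > m \geq 1$ with $\gcd(m,d)=1$, and $A,B,C \in K$ with $A \neq 0$. The discriminant of $g(x) = Ax^d + Bx^m + C$ equals $(-1)^{d(d-1)/2} A^{d-m-1} C^{m-1}\left[(-1)^{d-1} m^m (d-m)^{d-m} B^d + d^d A^m C^{d-m}\right]$. -/

import Mathlib

open Polynomial

lemma aux_sign {L : Type*} [CommRing L] (d : ℕ) (α : Fin d → L) :
    ∏ i : Fin d, ∏ j ∈ Finset.Ioi i, (α i - α j) ^ 2 =
      (-1 : L) ^ (d * (d - 1) / 2) *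
        ∏ i : Fin d, ∏ j ∈ Finset.univ.erase i, (α i - α j) := by
  have h := Finset.prod_prod_Ioi_mul_eq_prod_prod_off_diag (fun x y => α y - α x)
  beta_reduce at h
  have h2 : ∀ i : Fin d, (∏ j ∈ Finset.Ioi i, ((α i - α j) * (α j - α i))) =
      (-1 : L) ^ (Finset.Ioi i).card * ∏ j ∈ Finset.Ioi i, (α i - α j) ^ 2 := by
    intro i
    rw [← Finset.prod_const, ← Finset.prod_mul_distrib]
    exact Finset.prod_congr rfl (fun j _ => by ring)
  simp only [h2] at h
  rw [Finset.prod_mul_distrib, Finset.prod_pow_eq_pow_sum] at h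
  have hN : ∑ i : Fin d, (Finset.Ioi i).card = d * (d - 1) / 2 := by
    simp only [Fin.card_Ioi]
    rw [Fin.sum_univ_eq_sum_range (fun k => d - 1 - k)]
    rw [Finset.sum_range_reflect (fun k => k) d]
    exact Finset.sum_range_id d
  rw [hN] at h
  have h3 : ∏ i : Fin d, ∏ j ∈ ({i}ᶜ : Finset (Fin d)), (α i - α j) =
      (-1 : L) ^ (d * (d - 1) / 2) * ∏ i : Fin d, ∏ j ∈ Finset.Ioi i, (α i - α j) ^ 2 := by
    convert h.symm using 2
  have h4 : ∀ i : Fin d, ({i}ᶜ : Finset (Fin d)) = Finset.univ.erase i := by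
    intro i; ext j; simp [Finset.mem_compl, Finset.mem_erase, eq_comm]
  rw [Finset.prod_congr rfl (fun i _ => by rw [h4 i] : ∀ i ∈ Finset.univ,
      (∏ j ∈ ({i}ᶜ : Finset (Fin d)), (α i - α j)) = ∏ j ∈ Finset.univ.erase i, (α i - α j))] at h3
  rw [h3, ← mul_assoc, ← pow_add, Even.neg_one_pow ⟨d * (d - 1) / 2, rfl⟩, one_mul]


lemma aux_key {L : Type*} [Field L] [IsAlgClosed L] [CharZero L]
    (m n : ℕ) (hm : 1 ≤ m) (hn : 1 ≤ n) (hco : Nat.gcd m n = 1) (s t : L) :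
    ((X ^ n - C s : L[X]).roots.map (fun β => β ^ m - t)).prod =
      (-1 : L) ^ n * (t ^ n - s ^ m) := by
  have hn0 : n ≠ 0 := by omega
  have hm0 : m ≠ 0 := by omega
  by_cases hs : s = 0
  · subst hs
    rw [C_0, sub_zero, roots_X_pow]
    simp only [Multiset.nsmul_singleton, Multiset.map_replicate, zero_pow hm0, zero_sub,
      Multiset.prod_replicate]
    ring
  · have hnL : ((n : L)) ≠ 0 := Nat.cast_ne_zero.mpr hn0
    have hpm : (X ^ n - C s : L[X]).Monic := monic_X_pow_sub_C s hn0
    have hqm : (X ^ n - C (s ^ m) : L[X]).Monic := monic_X_pow_sub_C _ hn0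
    have hpcard : (X ^ n - C s : L[X]).roots.card = n := by
      rw [IsAlgClosed.card_roots_eq_natDegree, natDegree_X_pow_sub_C]
    have hqcard : (X ^ n - C (s ^ m) : L[X]).roots.card = n := by
      rw [IsAlgClosed.card_roots_eq_natDegree, natDegree_X_pow_sub_C]
    have hroot : ∀ β ∈ (X ^ n - C s : L[X]).roots, β ^ n = s := by
      intro β hb
      have := isRoot_of_mem_roots hb
      simpa [IsRoot, sub_eq_zero] using this
    have hpnd : (X ^ n - C s : L[X]).roots.Nodup := nodup_roots (separable_X_pow_sub_C s hnL hs)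
    have hqnd : (X ^ n - C (s ^ m) : L[X]).roots.Nodup :=
      nodup_roots (separable_X_pow_sub_C _ hnL (pow_ne_zero m hs))
    have hnd : ((X ^ n - C s : L[X]).roots.map (fun β => β ^ m)).Nodup := by
      refine Multiset.Nodup.map_on ?_ hpnd
      intro b1 h1 b2 h2 hE
      have e1 := hroot b1 h1
      have e2 := hroot b2 h2
      have hb2 : b2 ≠ 0 := by
        intro h; exact hs (by rw [← e2, h, zero_pow hn0])
      have hu : (b1 * b2⁻¹) ^ m = 1 := by
        rw [mul_pow, hE, ← mul_pow, mul_inv_cancel₀ hb2, one_pow]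
      have hun : (b1 * b2⁻¹) ^ n = 1 := by
        rw [mul_pow, e1, inv_pow, e2, mul_inv_cancel₀ hs]
      have := pow_gcd_eq_one.mpr ⟨hu, hun⟩
      rw [hco, pow_one] at this
      field_simp at this
      exact this
    have heq : (X ^ n - C s : L[X]).roots.map (fun β => β ^ m) =
        (X ^ n - C (s ^ m) : L[X]).roots := by
      refine Multiset.eq_of_le_of_card_le ?_ (by rw [Multiset.card_map, hpcard, hqcard])
      rw [Multiset.le_iff_subset hnd]
      intro x hx
      obtain ⟨β, hb, rfl⟩ := Multiset.mem_map.mp hx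
      rw [mem_roots hqm.ne_zero]
      have := hroot β hb
      have h2 : (β ^ m) ^ n = s ^ m := by rw [← pow_mul, mul_comm, pow_mul, this]
      simp [IsRoot, h2]
    have hq_prod : ((X ^ n - C (s ^ m) : L[X]).roots.map fun a => X - C a).prod
        = X ^ n - C (s ^ m) :=
      prod_multiset_X_sub_C_of_monic_of_roots_card_eq hqm
        (by rw [hqcard, natDegree_X_pow_sub_C])
    have hevalq : ((X ^ n - C (s ^ m) : L[X]).roots.map fun a => t - a).prod = t ^ n - s ^ m := by
      have := congrArg (eval t) hq_prod
      rw [eval_multiset_prod, Multiset.map_map] at this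
      simpa using this
    calc ((X ^ n - C s : L[X]).roots.map (fun β => β ^ m - t)).prod
        = ((X ^ n - C (s ^ m) : L[X]).roots.map (fun γ => γ - t)).prod := by
          rw [← heq, Multiset.map_map]; rfl
      _ = ((X ^ n - C (s ^ m) : L[X]).roots.map (fun γ => (-1) * (t - γ))).prod := by
          congr 1; exact Multiset.map_congr rfl (fun x _ => by ring)
      _ = ((X ^ n - C (s ^ m) : L[X]).roots.map (fun _ => (-1 : L))).prod *
          ((X ^ n - C (s ^ m) : L[X]).roots.map (fun γ => t - γ)).prod := by
          rw [← Multiset.prod_map_mul]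
      _ = (-1 : L) ^ n * (t ^ n - s ^ m) := by
          rw [hevalq, Multiset.map_const', Multiset.prod_replicate, hqcard]


/-- The discriminant of the trinomial `g(x) = Ax^d + Bx^m + C` (with `gcd(m,d)=1`,
`d > m ≥ 1`, `A ≠ 0`, char 0) equals
`(-1)^{d(d-1)/2} A^{d-m-1} C^{m-1} [(-1)^{d-1} m^m (d-m)^{d-m} B^d + d^d A^m C^{d-m}]`.
Here the discriminant of a degree-`d` polynomial with leading coefficient `A` and roots
`α_1,…,α_d` (with multiplicity, in an algebraic closure) is
`A^{2d-2} ∏_{i<j} (α_i - α_j)^2`. -/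
theorem stmt6 (K : Type*) [Field K] [CharZero K] (d m : ℕ)
    (hm : 1 ≤ m) (hmd : m < d) (hcop : Nat.gcd m d = 1)
    (A B C₀ : K) (hA : A ≠ 0)
    (α : Fin d → AlgebraicClosure K)
    (hroots : (Polynomial.C A * X ^ d + Polynomial.C B * X ^ m + Polynomial.C C₀).map
        (algebraMap K (AlgebraicClosure K)) =
      Polynomial.C (algebraMap K (AlgebraicClosure K) A) *
        ∏ i : Fin d, (X - Polynomial.C (α i))) :
    (algebraMap K (AlgebraicClosure K) A) ^ (2 * d - 2) *
        ∏ i : Fin d, ∏ j ∈ Finset.Ioi i, (α i - α j) ^ 2 =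
      algebraMap K (AlgebraicClosure K)
        ((-1) ^ (d * (d - 1) / 2) * A ^ (d - m - 1) * C₀ ^ (m - 1) *
          ((-1) ^ (d - 1) * (m : K) ^ m * ((d - m : ℕ) : K) ^ (d - m) * B ^ d +
            (d : K) ^ d * A ^ m * C₀ ^ (d - m))) := by
  classical
  obtain ⟨e1, rfl⟩ : ∃ e1, m = e1 + 1 := ⟨m - 1, by omega⟩
  obtain ⟨e3, rfl⟩ : ∃ e3, d = (e1 + 1) + (e3 + 1) := ⟨d - e1 - 2, by omega⟩
  have hco' : Nat.Coprime (e1 + 1) (e3 + 1) := by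
    have h : Nat.Coprime (e1 + 1) ((e3 + 1) + (e1 + 1)) := by
      rw [Nat.add_comm (e3+1) (e1+1)]; exact hcop
    exact Nat.coprime_add_self_right.mp h
  simp only [show (e1 + 1) + (e3 + 1) = e1 + e3 + 2 from by omega,
    show e1 + e3 + 2 - (e1 + 1) = e3 + 1 from by omega,
    show e1 + e3 + 2 - (e1 + 1) - 1 = e3 from by omega,
    show e1 + 1 - 1 = e1 from by omega,
    show e1 + e3 + 2 - 1 = e1 + e3 + 1 from by omega,
    show (e3 + 1) - 1 = e3 from by omega,
    show 2 * (e1 + e3 + 2) - 2 = 2 * e1 + 2 * e3 + 2 from by omega] at hroots ⊢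
  set a : K →+* AlgebraicClosure K := (algebraMap K (AlgebraicClosure K) : K →+* AlgebraicClosure K) with ha
  set A' : AlgebraicClosure K := a A with hA'd
  set B' : AlgebraicClosure K := a B with hB'd
  set E : AlgebraicClosure K := a C₀ with hEd
  have hA' : A' ≠ 0 := by simpa [hA'd] using hA
  simp only [Polynomial.map_add, Polynomial.map_mul, Polynomial.map_pow, map_C, map_X]
    at hroots
  have heval : ∀ x : AlgebraicClosure K, A' * x ^ (e1 + e3 + 2) + B' * x ^ (e1 + 1) + E =
      A' * ∏ i, (x - α i) := by
    intro x
    have h := congrArg (eval x) hroots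
    simpa [eval_prod] using h
  have hDi : ∀ i, ((e1 + e3 + 2 : ℕ) : AlgebraicClosure K) * A' * (α i) ^ (e1 + e3 + 1) +
      ((e1 + 1 : ℕ) : AlgebraicClosure K) * B' * (α i) ^ e1 =
      A' * ∏ j ∈ Finset.univ.erase i, (α i - α j) := by
    intro i
    have hiv : i ∈ Finset.univ.val := by simp
    have hsplitms : (Finset.univ.val.map α) = α i ::ₘ ((Finset.univ.erase i).val.map α) := by
      conv_lhs => rw [← Multiset.cons_erase hiv]
      rw [Multiset.map_cons, Finset.erase_val]
    have hprod_ms : (∏ j, (X - Polynomial.C (α j))) =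
        (Multiset.map (fun r => X - Polynomial.C r) (Finset.univ.val.map α)).prod := by
      rw [Multiset.map_map, Finset.prod_eq_multiset_prod]
      rfl
    have hmem : α i ∈ Finset.univ.val.map α := Multiset.mem_map_of_mem _ hiv
    have hD := congrArg derivative hroots
    rw [hprod_ms] at hD
    simp only [derivative_add, derivative_C_mul, derivative_X_pow, derivative_C] at hD
    have h := congrArg (eval (α i)) hD
    simp only [eval_add, eval_mul, eval_C, eval_pow, eval_X, add_zero, eval_zero] at h
    rw [eval_multiset_prod_X_sub_C_derivative hmem, hsplitms, Multiset.erase_cons_head,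
      Multiset.map_map] at h
    rw [show ((Finset.univ.erase i).val.map ((fun a => α i - a) ∘ α)).prod =
        ∏ j ∈ Finset.univ.erase i, (α i - α j) from
      (Finset.prod_eq_multiset_prod _ _).symm] at h
    rw [show e1 + e3 + 2 - 1 = e1 + e3 + 1 from by omega,
      show e1 + 1 - 1 = e1 from by omega] at h
    rw [← h, hA'd, hB'd]
    ring
  have hsq : ∀ N : ℕ, (-1 : AlgebraicClosure K) ^ N * (-1 : AlgebraicClosure K) ^ N = 1 := by
    intro N; rw [← pow_add]; exact Even.neg_one_pow ⟨N, rfl⟩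
  have hcard : Fintype.card (Fin (e1 + 1 + (e3 + 1))) = e1 + e3 + 2 := by
    simp only [Fintype.card_fin]; omega
  have hPA : A' * ∏ i, α i = (-1 : AlgebraicClosure K) ^ (e1 + e3 + 2) * E := by
    have h0 := heval 0
    have hneg : ∏ i, ((0 : AlgebraicClosure K) - α i) =
        (-1 : AlgebraicClosure K) ^ (e1 + e3 + 2) * ∏ i, α i := by
      rw [Finset.prod_congr rfl
          (fun i _ => (by ring : (0 : AlgebraicClosure K) - α i = -1 * α i)),
        Finset.prod_mul_distrib, Finset.prod_const, Finset.card_univ, hcard]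
    rw [hneg, zero_pow (by omega : (e1 + e3 + 2 : ℕ) ≠ 0),
      zero_pow (by omega : (e1 + 1 : ℕ) ≠ 0), mul_zero, mul_zero, zero_add, zero_add] at h0
    linear_combination (-(-1 : AlgebraicClosure K) ^ (e1 + e3 + 2)) * h0 -
      (A' * ∏ i, α i) * hsq (e1 + e3 + 2)
  set s : AlgebraicClosure K :=
    -(((e1 + 1 : ℕ) : AlgebraicClosure K) * B') /
      (((e1 + e3 + 2 : ℕ) : AlgebraicClosure K) * A') with hs_def
  have hdA : ((e1 + e3 + 2 : ℕ) : AlgebraicClosure K) * A' ≠ 0 :=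
    mul_ne_zero (Nat.cast_ne_zero.mpr (by omega)) hA'
  have hs : ((e1 + e3 + 2 : ℕ) : AlgebraicClosure K) * A' * s =
      -(((e1 + 1 : ℕ) : AlgebraicClosure K) * B') := by
    rw [hs_def]; exact mul_div_cancel₀ _ hdA
  clear_value s
  clear hs_def
  have hfac : ∀ i, ((e1 + e3 + 2 : ℕ) : AlgebraicClosure K) * A' * (α i) ^ (e1 + e3 + 1) +
      ((e1 + 1 : ℕ) : AlgebraicClosure K) * B' * (α i) ^ e1
      = (α i) ^ e1 * (((e1 + e3 + 2 : ℕ) : AlgebraicClosure K) * A' *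
        ((α i) ^ (e3 + 1) - s)) := by
    intro i
    linear_combination ((α i) ^ e1) * hs
  have hQP : (∏ i, (((e1 + e3 + 2 : ℕ) : AlgebraicClosure K) * A' * (α i) ^ (e1 + e3 + 1) +
      ((e1 + 1 : ℕ) : AlgebraicClosure K) * B' * (α i) ^ e1))
      = A' ^ (e1 + e3 + 2) * ∏ i, ∏ j ∈ Finset.univ.erase i, (α i - α j) := by
    rw [Finset.prod_congr rfl (fun i _ => hDi i), Finset.prod_mul_distrib,
      Finset.prod_const, Finset.card_univ, hcard]
  have hP2 : (∏ i, (((e1 + e3 + 2 : ℕ) : AlgebraicClosure K) * A' * (α i) ^ (e1 + e3 + 1) +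
      ((e1 + 1 : ℕ) : AlgebraicClosure K) * B' * (α i) ^ e1))
      = (∏ i, α i) ^ e1 * ((((e1 + e3 + 2 : ℕ) : AlgebraicClosure K) * A') ^ (e1 + e3 + 2) *
        ∏ i, ((α i) ^ (e3 + 1) - s)) := by
    rw [Finset.prod_congr rfl (fun i _ => hfac i), Finset.prod_mul_distrib,
      Finset.prod_mul_distrib, Finset.prod_pow, Finset.prod_const, Finset.card_univ, hcard]
  have hpm : (X ^ (e3 + 1) - Polynomial.C s : Polynomial (AlgebraicClosure K)).Monic :=
    monic_X_pow_sub_C s (by omega)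
  have hpcard : Multiset.card (X ^ (e3 + 1) - Polynomial.C s :
      Polynomial (AlgebraicClosure K)).roots = e3 + 1 := by
    rw [IsAlgClosed.card_roots_eq_natDegree, natDegree_X_pow_sub_C]
  have hpprod : (((X ^ (e3 + 1) - Polynomial.C s :
      Polynomial (AlgebraicClosure K)).roots).map fun β => X - Polynomial.C β).prod
      = X ^ (e3 + 1) - Polynomial.C s :=
    prod_multiset_X_sub_C_of_monic_of_roots_card_eq hpm
      (by rw [hpcard, natDegree_X_pow_sub_C])
  have hfact2 : ∀ x : AlgebraicClosure K, x ^ (e3 + 1) - s =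
      (((X ^ (e3 + 1) - Polynomial.C s :
        Polynomial (AlgebraicClosure K)).roots).map fun β => x - β).prod := by
    intro x
    have h := congrArg (eval x) hpprod
    rw [eval_multiset_prod, Multiset.map_map] at h
    simpa using h.symm
  have hswap : ∏ i, ((α i) ^ (e3 + 1) - s) =
      (((X ^ (e3 + 1) - Polynomial.C s :
        Polynomial (AlgebraicClosure K)).roots).map fun β => ∏ i, (α i - β)).prod := by
    rw [Finset.prod_congr rfl (fun i _ => hfact2 (α i)), Finset.prod_eq_multiset_prod,
      Multiset.prod_map_prod_map]
    congr 1
  have hβroot : ∀ β ∈ (X ^ (e3 + 1) - Polynomial.C s :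
      Polynomial (AlgebraicClosure K)).roots, β ^ (e3 + 1) = s := by
    intro β hb
    have := isRoot_of_mem_roots hb
    simpa [sub_eq_zero] using this
  set c : AlgebraicClosure K :=
    (((e3 + 1 : ℕ) : AlgebraicClosure K) * B') / ((e1 + e3 + 2 : ℕ) : AlgebraicClosure K)
    with hc_def
  have hcval : ((e1 + e3 + 2 : ℕ) : AlgebraicClosure K) * c =
      ((e3 + 1 : ℕ) : AlgebraicClosure K) * B' := by
    rw [hc_def]
    exact mul_div_cancel₀ _ (Nat.cast_ne_zero.mpr (by omega))
  clear_value c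
  clear hc_def
  have hDn : ((e1 + e3 + 2 : ℕ) : AlgebraicClosure K) ≠ 0 := Nat.cast_ne_zero.mpr (by omega)
  have hAsB : A' * s + B' = c := by
    have h1 := hs
    have h2 := hcval
    apply mul_left_cancel₀ hDn
    push_cast at h1 h2 ⊢
    linear_combination h1 - h2
  have hgb : ∀ β ∈ (X ^ (e3 + 1) - Polynomial.C s :
      Polynomial (AlgebraicClosure K)).roots,
      A' * ∏ i, (α i - β) =
      (-1 : AlgebraicClosure K) ^ (e1 + e3 + 2) * (c * β ^ (e1 + 1) + E) := by
    intro β hb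
    have h1 : ∏ i, (α i - β) =
        (-1 : AlgebraicClosure K) ^ (e1 + e3 + 2) * ∏ i, (β - α i) := by
      rw [Finset.prod_congr rfl
          (fun i _ => (by ring : α i - β = -1 * (β - α i))),
        Finset.prod_mul_distrib, Finset.prod_const, Finset.card_univ, hcard]
    have h3 := hβroot β hb
    have h5 : β ^ (e1 + e3 + 2) = β ^ (e1 + 1) * s := by
      rw [← h3, ← pow_add]
      congr 1
      omega
    rw [h1]
    linear_combination ((-1 : AlgebraicClosure K) ^ (e1 + e3 + 2)) * (β ^ (e1 + 1) * hAsB) -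
      ((-1 : AlgebraicClosure K) ^ (e1 + e3 + 2)) * heval β +
      ((-1 : AlgebraicClosure K) ^ (e1 + e3 + 2)) * A' * h5
  have hW1 : (((X ^ (e3 + 1) - Polynomial.C s :
      Polynomial (AlgebraicClosure K)).roots).map fun β => A' * ∏ i, (α i - β)).prod
      = ((-1 : AlgebraicClosure K) ^ (e1 + e3 + 2)) ^ (e3 + 1) *
        (((X ^ (e3 + 1) - Polynomial.C s :
          Polynomial (AlgebraicClosure K)).roots).map fun β =>
            c * β ^ (e1 + 1) + E).prod := by
    rw [Multiset.map_congr rfl hgb, Multiset.prod_map_mul, Multiset.map_const',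
      Multiset.prod_replicate, hpcard]
  have hW2 : (((X ^ (e3 + 1) - Polynomial.C s :
      Polynomial (AlgebraicClosure K)).roots).map fun β => A' * ∏ i, (α i - β)).prod
      = A' ^ (e3 + 1) * (((X ^ (e3 + 1) - Polynomial.C s :
        Polynomial (AlgebraicClosure K)).roots).map fun β => ∏ i, (α i - β)).prod := by
    rw [Multiset.prod_map_mul, Multiset.map_const', Multiset.prod_replicate, hpcard]
  have hW0 : (((X ^ (e3 + 1) - Polynomial.C s :
      Polynomial (AlgebraicClosure K)).roots).map fun β => c * β ^ (e1 + 1) + E).prod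
      = E ^ (e3 + 1) - (-1 : AlgebraicClosure K) ^ (e3 + 1) * c ^ (e3 + 1) * s ^ (e1 + 1) := by
    by_cases hc0 : c = 0
    · rw [hc0]
      simp only [zero_mul, zero_add, Multiset.map_const', Multiset.prod_replicate, hpcard,
        zero_pow (show e3 + 1 ≠ 0 by omega)]
      ring
    · have ht : c * (-E / c) = -E := mul_div_cancel₀ _ hc0
      have key := aux_key (e1 + 1) (e3 + 1) (by omega) (by omega) hco' s (-E / c)
      have hsplit : (((X ^ (e3 + 1) - Polynomial.C s :
          Polynomial (AlgebraicClosure K)).roots).map fun β => c * β ^ (e1 + 1) + E).prod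
          = ((((X ^ (e3 + 1) - Polynomial.C s :
            Polynomial (AlgebraicClosure K)).roots).map fun _ => c).prod) *
            ((((X ^ (e3 + 1) - Polynomial.C s :
              Polynomial (AlgebraicClosure K)).roots).map fun β =>
                β ^ (e1 + 1) - -E / c).prod) := by
        rw [← Multiset.prod_map_mul]
        exact congrArg Multiset.prod
          (Multiset.map_congr rfl (fun x _ => by linear_combination ht))
      rw [hsplit, Multiset.map_const', Multiset.prod_replicate, hpcard, key]
      have h6 : c ^ (e3 + 1) * (-E / c) ^ (e3 + 1) =
          (-1 : AlgebraicClosure K) ^ (e3 + 1) * E ^ (e3 + 1) := by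
        rw [← mul_pow, ht, neg_pow]
      linear_combination ((-1 : AlgebraicClosure K) ^ (e3 + 1)) * h6 +
        (E ^ (e3 + 1)) * hsq (e3 + 1)
  have hPi3 : A' ^ (e3 + 1) * ∏ i, ((α i) ^ (e3 + 1) - s)
      = ((-1 : AlgebraicClosure K) ^ (e1 + e3 + 2)) ^ (e3 + 1) *
        (E ^ (e3 + 1) - (-1 : AlgebraicClosure K) ^ (e3 + 1) * c ^ (e3 + 1) * s ^ (e1 + 1)) := by
    rw [hswap, ← hW2, hW1, hW0]
  have hsM : ((((e1 + e3 + 2 : ℕ) : AlgebraicClosure K) * A')) ^ (e1 + 1) * s ^ (e1 + 1) =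
      (-(((e1 + 1 : ℕ) : AlgebraicClosure K) * B')) ^ (e1 + 1) := by
    rw [← mul_pow, hs]
  have hcn : (((e1 + e3 + 2 : ℕ) : AlgebraicClosure K)) ^ (e3 + 1) * c ^ (e3 + 1) =
      (((e3 + 1 : ℕ) : AlgebraicClosure K) * B') ^ (e3 + 1) := by
    rw [← mul_pow, hcval]
  have hT1 : ((((e1 + e3 + 2 : ℕ) : AlgebraicClosure K) * A')) ^ (e1 + e3 + 2) *
      (A' ^ (e3 + 1) * ∏ i, ((α i) ^ (e3 + 1) - s))
      = ((-1 : AlgebraicClosure K) ^ (e1 + e3 + 2)) ^ (e3 + 1) *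
        (((((e1 + e3 + 2 : ℕ) : AlgebraicClosure K) * A')) ^ (e1 + e3 + 2) * E ^ (e3 + 1) -
          (-1 : AlgebraicClosure K) ^ (e3 + 1) * A' ^ (e3 + 1) *
            (-(((e1 + 1 : ℕ) : AlgebraicClosure K) * B')) ^ (e1 + 1) *
            (((e3 + 1 : ℕ) : AlgebraicClosure K) * B') ^ (e3 + 1)) := by
    linear_combination ((((e1 + e3 + 2 : ℕ) : AlgebraicClosure K) * A')) ^ (e1 + e3 + 2) * hPi3 -
      (((-1 : AlgebraicClosure K) ^ (e1 + e3 + 2)) ^ (e3 + 1) *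
        (-1 : AlgebraicClosure K) ^ (e3 + 1) * A' ^ (e3 + 1) *
        (((e1 + e3 + 2 : ℕ) : AlgebraicClosure K)) ^ (e3 + 1) * c ^ (e3 + 1)) * hsM -
      (((-1 : AlgebraicClosure K) ^ (e1 + e3 + 2)) ^ (e3 + 1) *
        (-1 : AlgebraicClosure K) ^ (e3 + 1) * A' ^ (e3 + 1) *
        (-(((e1 + 1 : ℕ) : AlgebraicClosure K) * B')) ^ (e1 + 1)) * hcn
  have hF2 : A' ^ e1 * (∏ i, α i) ^ e1 =
      ((-1 : AlgebraicClosure K) ^ (e1 + e3 + 2)) ^ e1 * E ^ e1 := by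
    rw [← mul_pow, hPA, mul_pow]
  have master : A' ^ (2 * e1 + 2 * e3 + 3) * ∏ i, ∏ j ∈ Finset.univ.erase i, (α i - α j)
      = ((-1 : AlgebraicClosure K) ^ (e1 + e3 + 2)) ^ e1 * E ^ e1 *
        (((-1 : AlgebraicClosure K) ^ (e1 + e3 + 2)) ^ (e3 + 1) *
          (((((e1 + e3 + 2 : ℕ) : AlgebraicClosure K) * A')) ^ (e1 + e3 + 2) * E ^ (e3 + 1) -
            (-1 : AlgebraicClosure K) ^ (e3 + 1) * A' ^ (e3 + 1) *
              (-(((e1 + 1 : ℕ) : AlgebraicClosure K) * B')) ^ (e1 + 1) *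
              (((e3 + 1 : ℕ) : AlgebraicClosure K) * B') ^ (e3 + 1))) := by
    linear_combination (-(A' ^ (e1 + (e3 + 1)))) * hQP + (A' ^ (e1 + (e3 + 1))) * hP2 +
      (A' ^ (e3 + 1) *
        ((((e1 + e3 + 2 : ℕ) : AlgebraicClosure K) * A')) ^ (e1 + e3 + 2) *
        (∏ i, ((α i) ^ (e3 + 1) - s))) * hF2 +
      (((-1 : AlgebraicClosure K) ^ (e1 + e3 + 2)) ^ e1 * E ^ e1) * hT1
  have SF : ((-1 : AlgebraicClosure K) ^ (e1 + e3 + 2)) ^ e1 *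
      ((-1 : AlgebraicClosure K) ^ (e1 + e3 + 2)) ^ (e3 + 1) = 1 := by
    rw [← pow_add, ← pow_mul]
    refine Even.neg_one_pow ?_
    rw [Nat.mul_comm]
    exact (by omega : e1 + (e3 + 1) = e1 + e3 + 1) ▸ Nat.even_mul_succ_self (e1 + e3 + 1)
  rw [aux_sign (e1 + 1 + (e3 + 1)) α]
  simp only [show e1 + 1 + (e3 + 1) = e1 + e3 + 2 from by omega,
    show e1 + e3 + 2 - 1 = e1 + e3 + 1 from by omega]
  simp only [map_mul, map_add, map_pow, map_neg, map_one, map_natCast, ← hA'd, ← hB'd, ← hEd]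
  apply mul_left_cancel₀ hA'
  linear_combination ((-1 : AlgebraicClosure K) ^ ((e1 + e3 + 2) * (e1 + e3 + 1) / 2)) * master +
    ((-1 : AlgebraicClosure K) ^ ((e1 + e3 + 2) * (e1 + e3 + 1) / 2) * E ^ e1 *
      (((((e1 + e3 + 2 : ℕ) : AlgebraicClosure K) * A')) ^ (e1 + e3 + 2) * E ^ (e3 + 1) -
        (-1 : AlgebraicClosure K) ^ (e3 + 1) * A' ^ (e3 + 1) *
          (-(((e1 + 1 : ℕ) : AlgebraicClosure K) * B')) ^ (e1 + 1) *
          (((e3 + 1 : ℕ) : AlgebraicClosure K) * B') ^ (e3 + 1))) * SF
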